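/- Consider the optimistic FTRL iterates p_t = argmin over p ∈ Ω of (⟨p, Σ_{τ<t} ℓ_τ + m_t⟩ + ψ_t(p)) on a compact convex set Ω. For any u ∈ Ω and any time t′: Σ_{t=1}^{t′} ⟨p_t - u, ℓ_t⟩ ≤ ψ_0(u) - min_{p∈Ω} ψ_0(p) + Σ_{t=1}^{t′} (ψ_t(u) - ψ_{t-1}(u) - ψ_t(p_t) + ψ_{t-1}(p_t)) + Σ_{t=1}^{t′} max over p ∈ Ω of (⟨p_t - p, ℓ_t - m_t⟩ - D_{ψ_t}(p, p_t)). -/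

import Mathlib

open Finset
open scoped RealInnerProductSpace

/-- Telescoping sum over `Icc 1 T`. -/
lemma ftrl_telescope (h : ℕ → ℝ) (T : ℕ) :
    ∑ t ∈ Finset.Icc 1 T, (h t - h (t - 1)) = h T - h 0 := by
  induction T with
  | zero => simp
  | succ n ih =>
      rw [Finset.sum_Icc_succ_top (by omega)]
      simp only [Nat.add_sub_cancel, ih]
      ring

/-- First-order optimality (variational inequality) for a minimizer over a convex set. -/
lemma ftrl_varineq {E : Type*} [NormedAddCommGroup E] [InnerProductSpace ℝ E]
    [CompleteSpace E] {Ω : Set E} (hconv : Convex ℝ Ω) {f : E → ℝ} {G x : E}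
    (hf : HasGradientAt f G x) (hx : x ∈ Ω)
    (hmin : ∀ q ∈ Ω, f x ≤ f q) {u : E} (hu : u ∈ Ω) : 0 ≤ ⟪G, u - x⟫ := by
  set φ : ℝ → ℝ := fun s => f (x + s • (u - x)) with hφ
  have hpath : ∀ s ∈ Set.Icc (0 : ℝ) 1, x + s • (u - x) ∈ Ω := by
    intro s hs
    have h1 : (1 - s) • x + s • u ∈ Ω :=
      hconv hx hu (by linarith [hs.2]) hs.1 (by ring)
    have h2 : (1 - s) • x + s • u = x + s • (u - x) := by
      rw [smul_sub, sub_smul, one_smul]; abel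
    rwa [h2] at h1
  -- the path derivative
  have hγ : HasDerivAt (fun s : ℝ => x + s • (u - x)) (u - x) 0 := by
    simpa using ((hasDerivAt_id (0 : ℝ)).smul_const (u - x)).const_add x
  have hγ0 : x + (0 : ℝ) • (u - x) = x := by simp
  have hFD : HasFDerivAt f (InnerProductSpace.toDual ℝ E G) (x + (0:ℝ) • (u - x)) := by
    rw [hγ0]; exact hf
  have hφd : HasDerivAt φ ⟪G, u - x⟫ 0 := by
    have := hFD.comp_hasDerivAt 0 hγ
    simp only [InnerProductSpace.toDual_apply_apply] at this
    exact this
  have hφdw : HasDerivWithinAt φ ⟪G, u - x⟫ (Set.Icc 0 1) 0 := hφd.hasDerivWithinAt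
  -- slope is nonnegative near 0
  have hslope : Filter.Tendsto (slope φ 0) (nhdsWithin 0 (Set.Icc (0:ℝ) 1 \ {0}))
      (nhds ⟪G, u - x⟫) := by
    rw [hasDerivWithinAt_iff_tendsto_slope] at hφdw
    exact hφdw
  rw [Set.Icc_diff_left] at hslope
  have hne : (nhdsWithin (0:ℝ) (Set.Ioc 0 1)).NeBot := by
    apply mem_closure_iff_nhdsWithin_neBot.1
    rw [closure_Ioc one_ne_zero.symm]
    exact ⟨le_refl _, zero_le_one⟩
  refine ge_of_tendsto hslope ?_
  filter_upwards [self_mem_nhdsWithin] with s hs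
  have hs' : s ∈ Set.Icc (0:ℝ) 1 := ⟨le_of_lt hs.1, hs.2⟩
  have hmins : φ 0 ≤ φ s := by
    have h0 : φ 0 = f x := by simp [hφ]
    rw [h0]
    exact hmin _ (hpath s hs')
  have hsl : slope φ 0 s = (φ s - φ 0) / s := by
    rw [slope_def_field, sub_zero]
  rw [hsl]
  apply div_nonneg (by linarith) (le_of_lt hs.1)

/-- Regret bound for optimistic FTRL (Lemma "FTRL"). -/
theorem optimistic_ftrl_regret {K : ℕ}
    (Ω : Set (EuclideanSpace ℝ (Fin K))) (hΩne : Ω.Nonempty)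
    (hΩc : IsCompact Ω) (hΩconv : Convex ℝ Ω)
    (ψ : ℕ → EuclideanSpace ℝ (Fin K) → ℝ)
    (g : ℕ → EuclideanSpace ℝ (Fin K) → EuclideanSpace ℝ (Fin K))
    (hg : ∀ t q, HasGradientAt (ψ t) (g t q) q)
    (hψconv : ∀ t, StrictConvexOn ℝ Ω (ψ t))
    (ℓ m : ℕ → EuclideanSpace ℝ (Fin K))
    (p : ℕ → EuclideanSpace ℝ (Fin K))
    (hp : ∀ t, 1 ≤ t → p t ∈ Ω ∧ ∀ q ∈ Ω,
      ⟪p t, (∑ τ ∈ Finset.Icc 1 (t-1), ℓ τ) + m t⟫ + ψ t (p t)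
        ≤ ⟪q, (∑ τ ∈ Finset.Icc 1 (t-1), ℓ τ) + m t⟫ + ψ t q)
    (u : EuclideanSpace ℝ (Fin K)) (hu : u ∈ Ω) (t' : ℕ) :
    ∑ t ∈ Finset.Icc 1 t', ⟪p t - u, ℓ t⟫
    ≤ ψ 0 u - sInf (ψ 0 '' Ω)
      + ∑ t ∈ Finset.Icc 1 t', (ψ t u - ψ (t-1) u - ψ t (p t) + ψ (t-1) (p t))
      + ∑ t ∈ Finset.Icc 1 t',
          sSup ((fun q => ⟪p t - q, ℓ t - m t⟫
            - (ψ t q - ψ t (p t) - ⟪g t (p t), q - p t⟫)) '' Ω) := by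
  classical
  have hcont : ∀ t, Continuous (ψ t) :=
    fun t => continuous_iff_continuousAt.2 fun x => (hg t x).differentiableAt.continuousAt
  set I : ℝ := sInf (ψ 0 '' Ω) with hI
  set δ : ℕ → ℝ := fun t => sSup ((fun q => ⟪p t - q, ℓ t - m t⟫
      - (ψ t q - ψ t (p t) - ⟪g t (p t), q - p t⟫)) '' Ω) with hδ
  -- basic bounds on I and δ
  have hIle : ∀ q ∈ Ω, I ≤ ψ 0 q := by
    intro q hq
    exact csInf_le ((hΩc.image (hcont 0)).bddBelow) ⟨q, hq, rfl⟩
  have hδge : ∀ t, ∀ q ∈ Ω,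
      ⟪p t - q, ℓ t - m t⟫ - (ψ t q - ψ t (p t) - ⟪g t (p t), q - p t⟫) ≤ δ t := by
    intro t q hq
    have hFc : Continuous (fun q : EuclideanSpace ℝ (Fin K) => ⟪p t - q, ℓ t - m t⟫
        - (ψ t q - ψ t (p t) - ⟪g t (p t), q - p t⟫)) := by
      apply Continuous.sub
      · exact (continuous_const.sub continuous_id).inner continuous_const
      · exact ((hcont t).sub continuous_const).sub
          (continuous_const.inner (continuous_id.sub continuous_const))
    exact le_csSup ((hΩc.image hFc).bddAbove) ⟨q, hq, rfl⟩
  -- the key inductive lemma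
  have star : ∀ T : ℕ, ∀ v ∈ Ω,
      ∑ t ∈ Finset.Icc 1 T, (⟪p t, ℓ t⟫ + (ψ t (p t) - ψ (t-1) (p t)) - δ t)
        ≤ ⟪v, ∑ τ ∈ Finset.Icc 1 T, ℓ τ⟫ + ψ T v - I := by
    intro T
    induction T with
    | zero =>
        intro v hv
        simp only [show Finset.Icc 1 0 = (∅ : Finset ℕ) by rfl, Finset.sum_empty,
          inner_zero_right]
        have := hIle v hv
        linarith
    | succ T ih =>
        intro v hv
        obtain ⟨hPΩ, hPmin⟩ := hp (T + 1) (by omega)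
        have hTsub : (T + 1) - 1 = T := by omega
        rw [hTsub] at hPmin
        set S : EuclideanSpace ℝ (Fin K) := ∑ τ ∈ Finset.Icc 1 T, ℓ τ with hS
        set P : EuclideanSpace ℝ (Fin K) := p (T + 1) with hP
        set L : EuclideanSpace ℝ (Fin K) := ℓ (T + 1) with hL
        set M : EuclideanSpace ℝ (Fin K) := m (T + 1) with hM
        set GP : EuclideanSpace ℝ (Fin K) := g (T + 1) P with hGP
        -- variational inequality for the FTRL objective
        have hgrad : HasGradientAt (fun q : EuclideanSpace ℝ (Fin K) => ⟪q, S + M⟫ + ψ (T + 1) q)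
            ((S + M) + GP) P := by
          rw [hasGradientAt_iff_hasFDerivAt]
          have h1 : HasFDerivAt (fun q : EuclideanSpace ℝ (Fin K) => ⟪q, S + M⟫)
              (InnerProductSpace.toDual ℝ (EuclideanSpace ℝ (Fin K)) (S + M)) P := by
            have h0 := (InnerProductSpace.toDual ℝ (EuclideanSpace ℝ (Fin K)) (S + M)).hasFDerivAt
              (x := P)
            have hfe : (fun q : EuclideanSpace ℝ (Fin K) => ⟪q, S + M⟫)
                = fun q => (InnerProductSpace.toDual ℝ (EuclideanSpace ℝ (Fin K)) (S + M)) q := by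
              funext q
              rw [InnerProductSpace.toDual_apply_apply]
              exact (real_inner_comm q (S + M)).symm
            rw [hfe]
            exact h0
          have h2 : HasFDerivAt (ψ (T + 1))
              (InnerProductSpace.toDual ℝ (EuclideanSpace ℝ (Fin K)) GP) P := hg (T + 1) P
          have h3 := h1.add h2
          rwa [← map_add] at h3
        have hvar : 0 ≤ ⟪(S + M) + GP, v - P⟫ := by
          apply ftrl_varineq hΩconv hgrad hPΩ _ hv
          intro q hq
          exact hPmin q hq
        -- sup bound at q := v
        have hδb : ⟪P - v, L - M⟫ - (ψ (T+1) v - ψ (T+1) P - ⟪GP, v - P⟫) ≤ δ (T+1) :=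
          hδge (T + 1) v hv
        -- induction hypothesis at v := P
        have hih : ∑ t ∈ Finset.Icc 1 T, (⟪p t, ℓ t⟫ + (ψ t (p t) - ψ (t-1) (p t)) - δ t)
            ≤ ⟪P, S⟫ + ψ T P - I := ih P hPΩ
        rw [Finset.sum_Icc_succ_top (by omega : 1 ≤ T + 1),
          Finset.sum_Icc_succ_top (by omega : 1 ≤ T + 1)]
        rw [hTsub]
        -- expand inner products
        have e1 : ⟪v, S + L⟫ = ⟪v, S⟫ + ⟪v, L⟫ := inner_add_right _ _ _
        have e2 : ⟪P - v, L - M⟫ = (⟪P, L⟫ - ⟪P, M⟫) - (⟪v, L⟫ - ⟪v, M⟫) := by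
          rw [inner_sub_left, inner_sub_right, inner_sub_right]
        have e3 : ⟪(S + M) + GP, v - P⟫
            = (⟪v, S⟫ + ⟪v, M⟫ + ⟪GP, v⟫) - (⟪P, S⟫ + ⟪P, M⟫ + ⟪GP, P⟫) := by
          simp only [inner_sub_right, inner_add_left]
          rw [real_inner_comm S v, real_inner_comm M v, real_inner_comm S P,
            real_inner_comm M P]
        have e4 : ⟪GP, v - P⟫ = ⟪GP, v⟫ - ⟪GP, P⟫ := inner_sub_right _ _ _
        rw [e1]
        rw [e2, e4] at hδb
        rw [e3] at hvar
        linarith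
  -- final assembly
  have hstar := star t' u hu
  -- rewrite the goal sums
  have h1 : ∑ t ∈ Finset.Icc 1 t', ⟪p t - u, ℓ t⟫
      = ∑ t ∈ Finset.Icc 1 t', ⟪p t, ℓ t⟫ - ⟪u, ∑ τ ∈ Finset.Icc 1 t', ℓ τ⟫ := by
    rw [inner_sum, ← Finset.sum_sub_distrib]
    exact Finset.sum_congr rfl fun t _ => inner_sub_left _ _ _
  have h2 : ∑ t ∈ Finset.Icc 1 t', (ψ t u - ψ (t-1) u - ψ t (p t) + ψ (t-1) (p t))
      = (ψ t' u - ψ 0 u)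
        - ∑ t ∈ Finset.Icc 1 t', (ψ t (p t) - ψ (t-1) (p t)) := by
    rw [← ftrl_telescope (fun t => ψ t u) t', ← Finset.sum_sub_distrib]
    exact Finset.sum_congr rfl fun t _ => by ring
  have h3 : ∑ t ∈ Finset.Icc 1 t', (⟪p t, ℓ t⟫ + (ψ t (p t) - ψ (t-1) (p t)) - δ t)
      = ∑ t ∈ Finset.Icc 1 t', ⟪p t, ℓ t⟫
        + ∑ t ∈ Finset.Icc 1 t', (ψ t (p t) - ψ (t-1) (p t))
        - ∑ t ∈ Finset.Icc 1 t', δ t := by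
    rw [← Finset.sum_add_distrib, ← Finset.sum_sub_distrib]
  rw [h3] at hstar
  rw [h1, h2]
  linarith
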